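/- Let G be a directed multigraph and H its largest full subgraph (the subgraph consisting of all edges contained in some cycle, with their endpoints). Then dim P(G) = |E(H)| − |V(H)| + c(H) − 1, where c(H) is the number of connected components of H. -/

import Mathlib

open Filter Finset List

variable {V E : Type*}

/-- A (non-empty) closed directed walk in the directed multigraph with edge-source map `src`
and edge-target map `tgt`: a nonempty list of edges in which the target of each edge is the
source of the next, and the target of the last edge is the source of the first. -/
def IsCycleWalk (src tgt : E → V) (c : List E) : Prop :=
  c ≠ [] ∧ c.Chain' (fun a b => tgt a = src b) ∧ c.getLast?.map tgt = c.head?.map src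

/-- A simple cycle: a closed directed walk that does not repeat vertices. -/
def IsSimpleCycle (src tgt : E → V) (c : List E) : Prop :=
  IsCycleWalk src tgt c ∧ (c.map src).Nodup

/-- The normalized incidence vector `e_C` of a cycle `C`:
its coordinate at an edge `e` is (number of occurrences of `e` in `C`)/|C|. -/
noncomputable def cycleVec [DecidableEq E] (c : List E) : E → ℝ :=
  fun e => (c.count e : ℝ) / (c.length : ℝ)

/-- The cycle polytope of a directed multigraph: the convex hull of the normalized incidence
vectors of its simple cycles. -/
noncomputable def cyclePolytope [DecidableEq E] (src tgt : E → V) : Set (E → ℝ) :=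
  convexHull ℝ { x | ∃ c, IsSimpleCycle src tgt c ∧ x = cycleVec c }

/-- The edge set of the largest full subgraph `H` of `G`: all edges contained in some cycle. -/
def fullEdges (src tgt : E → V) : Set E :=
  { e | ∃ c, IsCycleWalk src tgt c ∧ e ∈ c }

/-- The vertex set of the largest full subgraph `H` of `G`: the endpoints of its edges. -/
def fullVertices (src tgt : E → V) : Set V :=
  { v | ∃ e ∈ fullEdges src tgt, src e = v ∨ tgt e = v }

/-- Undirected adjacency on the vertices of `H` via the edges of `H`. -/
def fullAdj (src tgt : E → V) (a b : fullVertices src tgt) : Prop :=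
  ∃ e ∈ fullEdges src tgt, (src e = a.1 ∧ tgt e = b.1) ∨ (src e = b.1 ∧ tgt e = a.1)

/-- The number of connected components of `H` (with respect to the underlying undirected
graph): the number of classes of vertices of `H` under the adjacency relation. -/
noncomputable def fullComponents (src tgt : E → V) : ℕ :=
  Nat.card (Quot (fullAdj src tgt))


section Aux
open List Matrix

/-- L1 helper -/
lemma map_tgt_eq (src tgt : E → V) : ∀ (c : List E), c ≠ [] →
    c.Chain' (fun a b => tgt a = src b) →
    ∀ x, c.getLast?.map tgt = some x →
    c.map tgt = (c.map src).tail ++ [x]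
  | [], h, _, _, _ => absurd rfl h
  | [e], _, _, x, hx => by
      simp [List.getLast?] at hx
      simp [hx]
  | e :: e' :: t, _, hch, x, hx => by
      have hch' : (e' :: t).Chain' (fun a b => tgt a = src b) := hch.tail
      have h1 : tgt e = src e' := hch.rel_head
      have hx' : (e' :: t).getLast?.map tgt = some x := by
        rwa [show (e :: e' :: t).getLast? = (e' :: t).getLast? from rfl] at hx
      have ih := map_tgt_eq src tgt (e' :: t) (by simp) hch' x hx'
      simp only [List.map_cons, List.tail_cons] at ih ⊢
      rw [ih, h1, List.cons_append]

lemma cycle_perm {src tgt : E → V} {c : List E} (h : IsCycleWalk src tgt c) :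
    (c.map tgt).Perm (c.map src) := by
  obtain ⟨hne, hch, hcl⟩ := h
  obtain ⟨e, t, rfl⟩ := List.exists_cons_of_ne_nil hne
  have hlast : (e :: t).getLast?.map tgt = some (src e) := by
    rw [hcl]; simp
  have := map_tgt_eq src tgt (e :: t) (by simp) hch (src e) hlast
  rw [this]
  simp only [List.map_cons, List.tail_cons]
  simpa using (List.perm_append_singleton (src e) ((e :: t).map src).tail).symm

/-- duplicate split -/
lemma exists_dup_split {α : Type*} : ∀ (l : List α), ¬ l.Nodup →
    ∃ v l1 l2 l3, l = l1 ++ v :: l2 ++ v :: l3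
  | [], h => absurd List.nodup_nil h
  | a :: l, h => by
    by_cases ha : a ∈ l
    · obtain ⟨l2, l3, rfl⟩ := List.append_of_mem ha
      exact ⟨a, [], l2, l3, rfl⟩
    · have hl : ¬ l.Nodup := fun hn => h (List.nodup_cons.mpr ⟨ha, hn⟩)
      obtain ⟨v, l1, l2, l3, rfl⟩ := exists_dup_split l hl
      exact ⟨v, a :: l1, l2, l3, rfl⟩

/-- Decomposition of a closed walk into simple cycles, at the level of edge counts. -/
lemma cycle_decomp [DecidableEq E] (src tgt : E → V) : ∀ (n : ℕ) (c : List E), c.length ≤ n →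
    IsCycleWalk src tgt c →
    ∃ L : List (List E), (∀ d ∈ L, IsSimpleCycle src tgt d) ∧
      ∀ e, c.count e = (L.map (fun d => d.count e)).sum := by
  intro n
  induction n with
  | zero => intro c hc h; exact absurd (List.length_eq_zero_iff.mp (Nat.le_zero.mp hc)) h.1
  | succ n ih =>
    intro c hc h
    by_cases hnd : (c.map src).Nodup
    · exact ⟨[c], by simpa [IsSimpleCycle] using ⟨h, hnd⟩, fun e => by simp⟩
    · obtain ⟨v, m1, m2, m3, hm⟩ := exists_dup_split _ hnd
      -- split c accordingly
      rw [show m1 ++ v :: m2 ++ v :: m3 = m1 ++ ((v :: m2) ++ v :: m3) by simp] at hm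
      obtain ⟨a, rest, rfl, hma, hrest⟩ := List.map_eq_append_iff.mp hm
      obtain ⟨b', rest2, rfl, hmb', hrest2⟩ := List.map_eq_append_iff.mp hrest
      rcases b' with _ | ⟨e1, b⟩
      · simp at hmb'
      rcases rest2 with _ | ⟨e2, d⟩
      · simp at hrest2
      simp only [List.map_cons, List.cons.injEq] at hmb' hrest2
      obtain ⟨he1, hmb⟩ := hmb'
      obtain ⟨he2, hmd⟩ := hrest2
      -- c = a ++ (e1 :: b) ++ (e2 :: d), src e1 = src e2 = v
      obtain ⟨hne, hch, hcl⟩ := h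
      have hch1 : ((e1 :: b) ++ (e2 :: d)).Chain' (fun a b => tgt a = src b) :=
        hch.infix ⟨a, [], by simp⟩
      simp only [List.Chain', List.isChain_append] at hch1
      obtain ⟨hchb, hchd, hjoin⟩ := hch1
      -- first cycle: e1 :: b
      have hc1 : IsCycleWalk src tgt (e1 :: b) := by
        refine ⟨by simp, hchb, ?_⟩
        have := hjoin ((e1 :: b).getLast (by simp)) (by simp [List.getLast?_eq_getLast]) e2 (by simp)
        simp [List.getLast?_eq_getLast, this, he1, he2]
      -- second cycle: a ++ e2 :: d
      have hc2 : IsCycleWalk src tgt (a ++ e2 :: d) := by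
        constructor
        · simp
        constructor
        · simp only [List.Chain', List.isChain_append]
          refine ⟨(hch.infix ⟨[], (e1 :: b) ++ (e2 :: d), by simp⟩), hchd, ?_⟩
          intro x hx y hy
          simp only [List.head?_cons, Option.mem_def, Option.some.injEq] at hy
          subst hy
          -- x is last of a; chain across a | e1 boundary gives tgt x = src e1
          have hchae1 : (a ++ [e1]).Chain' (fun a b => tgt a = src b) :=
            hch.infix ⟨[], b ++ (e2 :: d), by simp⟩
          simp only [List.Chain', List.isChain_append] at hchae1
          have := hchae1.2.2 x hx e1 (by simp)
          rw [this, he1, he2]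
        · -- closing condition
          have hlast2 : (a ++ e2 :: d).getLast? = (a ++ (e1 :: (b ++ e2 :: d))).getLast? := by
            rw [show a ++ (e1 :: (b ++ e2 :: d)) = (a ++ e1 :: b) ++ e2 :: d by simp,
                List.getLast?_append_cons, List.getLast?_append_cons]
          refine (congrArg (Option.map tgt) hlast2).trans (hcl.trans ?_)
          rcases a with _ | ⟨a0, a'⟩
          · simp [he1, he2]
          · simp
      -- lengths
      have hlen1 : (e1 :: b).length ≤ n := by
        have := hc; simp [List.length_append] at this ⊢; omega
      have hlen2 : (a ++ e2 :: d).length ≤ n := by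
        have := hc; simp [List.length_append] at this ⊢; omega
      obtain ⟨L1, hL1, hcount1⟩ := ih (e1 :: b) hlen1 hc1
      obtain ⟨L2, hL2, hcount2⟩ := ih (a ++ e2 :: d) hlen2 hc2
      refine ⟨L1 ++ L2, ?_, ?_⟩
      · intro dd hdd
        rcases List.mem_append.mp hdd with h' | h'
        · exact hL1 dd h'
        · exact hL2 dd h'
      · intro e
        simp only [List.map_append, List.sum_append, ← hcount1, ← hcount2]
        simp [List.count_append, List.count_cons]
        ring

lemma exists_simple_cycle_mem [DecidableEq E] {src tgt : E → V} {e : E}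
    (he : e ∈ fullEdges src tgt) :
    ∃ d, IsSimpleCycle src tgt d ∧ e ∈ d := by
  obtain ⟨c, hc, hec⟩ := he
  obtain ⟨L, hL, hcount⟩ := cycle_decomp src tgt c.length c le_rfl hc
  have h1 : 1 ≤ c.count e := List.one_le_count_iff.mpr hec
  rw [hcount e] at h1
  have : ∃ d ∈ L, 1 ≤ d.count e := by
    by_contra hcon
    push_neg at hcon
    have : (L.map (fun d => d.count e)).sum = 0 := by
      apply List.sum_eq_zero
      intro x hx
      obtain ⟨d, hd, rfl⟩ := List.mem_map.mp hx
      exact Nat.lt_one_iff.mp (hcon d hd)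
    omega
  obtain ⟨d, hdL, hd1⟩ := this
  exact ⟨d, hL d hdL, List.one_le_count_iff.mp hd1⟩

lemma walk_cycle (src tgt : E → V) (g : ℕ → E) (hg : ∀ n, src (g (n+1)) = tgt (g n))
    {i j : ℕ} (hij : i < j) (hv : src (g i) = src (g j)) :
    ∃ c : List E, IsCycleWalk src tgt c ∧ ∀ e ∈ c, ∃ n, e = g n := by
  set f : ℕ → E := fun k => g (i + k) with hf
  obtain ⟨m, hm⟩ : ∃ m, j - i = m + 1 := ⟨j - i - 1, by omega⟩
  refine ⟨(List.range (j - i)).map f, ⟨?_, ?_, ?_⟩, ?_⟩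
  · simp [hm]
  · simp only [List.Chain', List.isChain_map]; rw [hm, List.isChain_range_succ]
    intro k _
    simp only [hf, Nat.add_succ]
    exact (hg (i+k)).symm
  · have hhead : ((List.range (j - i)).map f).head? = some (f 0) := by
      rw [hm, List.range_succ_eq_map]
      simp
    have hlastR : ((List.range (j - i)).map f).getLast? = some (f m) := by
      rw [hm, List.range_succ, List.map_append]
      simp
    rw [hhead, hlastR]
    simp only [Option.map_some]
    have : i + m + 1 = j := by omega
    rw [hf]
    simp only []
    rw [show (i + 0 : ℕ) = i by ring]
    rw [hv, ← this, ← hg (i + m)]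
  · intro e he
    obtain ⟨k, _, rfl⟩ := List.mem_map.mp he
    exact ⟨i + k, rfl⟩

lemma edge_mem_fullEdges {src tgt : E → V} {c : List E} (hc : IsCycleWalk src tgt c)
    {e : E} (he : e ∈ c) : e ∈ fullEdges src tgt := ⟨c, hc, he⟩

lemma exists_simple_cycle_subset [DecidableEq E] {src tgt : E → V} {c : List E}
    (hc : IsCycleWalk src tgt c) :
    ∃ d, IsSimpleCycle src tgt d ∧ ∀ e ∈ d, e ∈ c := by
  obtain ⟨L, hL, hcount⟩ := cycle_decomp src tgt c.length c le_rfl hc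
  obtain ⟨e0, c', rfl⟩ := List.exists_cons_of_ne_nil hc.1
  have h1 : 1 ≤ (e0 :: c').count e0 := List.one_le_count_iff.mpr (by simp)
  rw [hcount e0] at h1
  have hLne : L ≠ [] := by rintro rfl; simp at h1
  obtain ⟨d, hd⟩ := List.exists_mem_of_ne_nil L hLne
  refine ⟨d, hL d hd, fun e he => ?_⟩
  have hle : d.count e ≤ (e0 :: c').count e := by
    rw [hcount e]
    exact List.single_le_sum (fun x _ => Nat.zero_le x) _ (List.mem_map.mpr ⟨d, hd, rfl⟩)
  have : 1 ≤ (e0 :: c').count e := le_trans (List.one_le_count_iff.mpr he) hle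
  exact List.one_le_count_iff.mp this

lemma exists_src_eq {src tgt : E → V} {v : V} (hv : v ∈ fullVertices src tgt) :
    ∃ e ∈ fullEdges src tgt, src e = v := by
  obtain ⟨e, he, hor⟩ := hv
  rcases hor with h | h
  · exact ⟨e, he, h⟩
  · obtain ⟨c, hc, hec⟩ := he
    have hmem : v ∈ c.map tgt := List.mem_map.mpr ⟨e, hec, h⟩
    have hmem' : v ∈ c.map src := (cycle_perm hc).mem_iff.mp hmem
    obtain ⟨e', he', hse'⟩ := List.mem_map.mp hmem'
    exact ⟨e', edge_mem_fullEdges hc he', hse'⟩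

/-- The unnormalized incidence vector. -/
noncomputable def countVec [DecidableEq E] (c : List E) : E → ℝ := fun e => (c.count e : ℝ)

open Classical in
/-- Circulation condition. -/
def Circ [Fintype E] (src tgt : E → V) (x : E → ℝ) : Prop :=
  ∀ v : V, (∑ e, if tgt e = v then x e else 0) = ∑ e, if src e = v then x e else 0

open Classical in
/-- The submodule of circulations supported on the full subgraph. -/
noncomputable def circSpace [Fintype E] (src tgt : E → V) : Submodule ℝ (E → ℝ) where
  carrier := {x | Circ src tgt x ∧ ∀ e, x e ≠ 0 → e ∈ fullEdges src tgt}
  zero_mem' := ⟨fun v => by simp, fun e h => absurd rfl h⟩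
  add_mem' := by
    rintro x y ⟨hx, hx'⟩ ⟨hy, hy'⟩
    refine ⟨fun v => ?_, fun e h => ?_⟩
    · have : ∀ (z : E → ℝ) (f : E → V), (∑ e, if f e = v then x e + y e else 0) =
        (∑ e, if f e = v then x e else 0) + ∑ e, if f e = v then y e else 0 := by
        intro z f
        rw [← Finset.sum_add_distrib]
        exact Finset.sum_congr rfl fun e _ => by split <;> simp
      simp only [Pi.add_apply]
      rw [this x tgt, this x src, hx v, hy v]
    · by_cases hxe : x e ≠ 0
      · exact hx' e hxe
      · push_neg at hxe
        exact hy' e (by simpa [hxe] using h)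
  smul_mem' := by
    rintro t x ⟨hx, hx'⟩
    refine ⟨fun v => ?_, fun e h => ?_⟩
    · have : ∀ (f : E → V), (∑ e, if f e = v then (t • x) e else 0) =
        t * ∑ e, if f e = v then x e else 0 := by
        intro f
        rw [Finset.mul_sum]
        exact Finset.sum_congr rfl fun e _ => by split <;> simp [mul_comm]
      rw [this tgt, this src, hx v]
    · refine hx' e fun h0 => h ?_
      simp [h0]

open Classical in
lemma sum_ite_count [Fintype E] [DecidableEq E] (f : E → V) (v : V) (c : List E) :
    (∑ e, if f e = v then (c.count e : ℝ) else 0) = ((c.map f).count v : ℝ) := by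
  induction c with
  | nil => simp
  | cons a c ih =>
    simp only [List.count_cons, List.map_cons, beq_iff_eq]
    push_cast
    rw [show (∑ e, if f e = v then ((c.count e : ℝ) + if a = e then 1 else 0) else 0)
        = (∑ e, if f e = v then (c.count e : ℝ) else 0)
          + ∑ e, if f e = v then (if a = e then (1:ℝ) else 0) else 0 by
      rw [← Finset.sum_add_distrib]; exact Finset.sum_congr rfl fun e _ => by split <;> simp]
    rw [ih]
    congr 1
    rw [Finset.sum_eq_single a]
    · by_cases h : f a = v <;> simp [h, List.count_cons, eq_comm]
    · intro b _ hb
      simp [Ne.symm hb]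
    · simp

lemma countVec_mem_circSpace [Fintype E] [DecidableEq E] {src tgt : E → V} {c : List E}
    (hc : IsCycleWalk src tgt c) : countVec c ∈ circSpace src tgt := by
  classical
  constructor
  · intro v
    have h1 := sum_ite_count (V := V) tgt v c
    have h2 := sum_ite_count (V := V) src v c
    have h3 : (c.map tgt).count v = (c.map src).count v := (cycle_perm hc).count_eq v
    unfold countVec
    rw [show (∑ e, if tgt e = v then (c.count e : ℝ) else 0)
        = ((c.map tgt).count v : ℝ) from h1,
      show (∑ e, if src e = v then (c.count e : ℝ) else 0)
        = ((c.map src).count v : ℝ) from h2, h3]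
  · intro e h
    have : e ∈ c := by
      by_contra hec
      simp [countVec, List.count_eq_zero_of_not_mem hec] at h
    exact edge_mem_fullEdges hc this

/-- Span of the unnormalized simple-cycle vectors. -/
noncomputable def cycleSpan [Fintype E] [DecidableEq E] (src tgt : E → V) : Submodule ℝ (E → ℝ) :=
  Submodule.span ℝ {x | ∃ c, IsSimpleCycle src tgt c ∧ x = countVec c}

open Classical in
lemma nonneg_circ_mem_span [Fintype V] [Fintype E] [DecidableEq E] (src tgt : E → V) :
    ∀ (n : ℕ) (x : E → ℝ), (Finset.univ.filter (fun e => x e ≠ 0)).card ≤ n →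
    (∀ e, 0 ≤ x e) → x ∈ circSpace src tgt → x ∈ cycleSpan src tgt := by
  intro n
  induction n with
  | zero =>
    intro x hcard h0 hx
    have hall : ∀ e, x e = 0 := by
      intro e
      by_contra he
      have : e ∈ Finset.univ.filter (fun e => x e ≠ 0) := by simp [he]
      have := Finset.card_pos.mpr ⟨e, this⟩
      omega
    have : x = 0 := funext hall
    rw [this]
    exact Submodule.zero_mem _
  | succ n ih =>
    intro x hcard h0 hx
    by_cases hex : ∀ e, x e = 0
    · rw [funext hex]; exact Submodule.zero_mem _
    push_neg at hex
    obtain ⟨e0, he0⟩ := hex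
    have step : ∀ e : E, x e ≠ 0 → ∃ e', x e' ≠ 0 ∧ src e' = tgt e := by
      intro e he
      have hxe : 0 < x e := lt_of_le_of_ne (h0 e) (Ne.symm he)
      have hle : x e ≤ ∑ e', if tgt e' = tgt e then x e' else 0 := by
        have := Finset.single_le_sum (f := fun e' => if tgt e' = tgt e then x e' else 0)
          (fun e' _ => by by_cases h : tgt e' = tgt e <;> simp [h, h0 e']) (Finset.mem_univ e)
        simpa using this
      have hpos : 0 < ∑ e', if src e' = tgt e then x e' else 0 := by
        rw [← hx.1 (tgt e)]
        linarith
      obtain ⟨e', _, he'⟩ := Finset.exists_ne_zero_of_sum_ne_zero (ne_of_gt hpos)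
      by_cases hsrc : src e' = tgt e
      · exact ⟨e', by simpa [hsrc] using he', hsrc⟩
      · simp [hsrc] at he'
    choose nxt h1 h2 using step
    let g : ℕ → {e : E // x e ≠ 0} := fun n =>
      Nat.rec ⟨e0, he0⟩ (fun _ p => ⟨nxt p.1 p.2, h1 p.1 p.2⟩) n
    have hgs : ∀ k, src (g (k+1)).1 = tgt (g k).1 := fun k => h2 _ _
    obtain ⟨i, j, hne, heq⟩ :=
      Finite.exists_ne_map_eq_of_infinite (fun k => src (g k).1)
    have hwalk : ∀ {i j : ℕ}, i < j → src (g i).1 = src (g j).1 →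
        x ∈ cycleSpan src tgt := by
      intro i j hij hv
      obtain ⟨c, hcwalk, hcmem⟩ := walk_cycle src tgt (fun k => (g k).1) hgs hij hv
      have hcsupp : ∀ e ∈ c, x e ≠ 0 := by
        intro e he
        obtain ⟨n', rfl⟩ := hcmem e he
        exact (g n').2
      obtain ⟨d, hd, hdc⟩ := exists_simple_cycle_subset hcwalk
      have hdsupp : ∀ e ∈ d, x e ≠ 0 := fun e he => hcsupp e (hdc e he)
      have hdne : d.toFinset.Nonempty := by
        obtain ⟨e, he⟩ := List.exists_mem_of_ne_nil d hd.1.1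
        exact ⟨e, List.mem_toFinset.mpr he⟩
      obtain ⟨emin, hemin, hteq⟩ :=
        Finset.exists_mem_eq_inf' hdne (fun e => x e / (d.count e : ℝ))
      rw [List.mem_toFinset] at hemin
      set t : ℝ := x emin / (d.count emin : ℝ) with htdef
      have hcntpos : ∀ e ∈ d, (0:ℝ) < (d.count e : ℝ) := by
        intro e he
        exact_mod_cast List.one_le_count_iff.mpr he
      have hxpos : ∀ e ∈ d, 0 < x e := fun e he =>
        lt_of_le_of_ne (h0 e) (Ne.symm (hdsupp e he))
      have htpos : 0 < t := div_pos (hxpos emin hemin) (hcntpos emin hemin)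
      have htle : ∀ e ∈ d, t ≤ x e / (d.count e : ℝ) := by
        intro e he
        have h := Finset.inf'_le (fun e => x e / (d.count e : ℝ)) (List.mem_toFinset.mpr he)
        rwa [hteq] at h
      have hle : ∀ e ∈ d, t * (d.count e : ℝ) ≤ x e := by
        intro e he
        calc t * (d.count e : ℝ) ≤ (x e / (d.count e : ℝ)) * (d.count e : ℝ) :=
              mul_le_mul_of_nonneg_right (htle e he) (le_of_lt (hcntpos e he))
          _ = x e := div_mul_cancel₀ _ (ne_of_gt (hcntpos e he))
      set x' : E → ℝ := fun e => x e - t * (d.count e : ℝ) with hx'def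
      have hx'eq : x' = x - t • countVec d := by
        funext e; simp [hx'def, countVec]
      have h0' : ∀ e, 0 ≤ x' e := by
        intro e
        by_cases he : e ∈ d
        · simp only [hx'def]; linarith [hle e he]
        · simp [hx'def, List.count_eq_zero_of_not_mem he, h0 e]
      have hx'circ : x' ∈ circSpace src tgt := by
        rw [hx'eq]
        exact Submodule.sub_mem _ hx
          (Submodule.smul_mem _ t (countVec_mem_circSpace hd.1))
      have hmin0 : x' emin = 0 := by
        simp only [hx'def, htdef]
        rw [div_mul_cancel₀ _ (ne_of_gt (hcntpos emin hemin))]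
        ring
      have hsub : Finset.univ.filter (fun e => x' e ≠ 0) ⊆
          (Finset.univ.filter (fun e => x e ≠ 0)).erase emin := by
        intro e he
        rw [Finset.mem_filter] at he
        rw [Finset.mem_erase, Finset.mem_filter]
        refine ⟨fun h => he.2 (h ▸ hmin0), Finset.mem_univ e, fun h => he.2 ?_⟩
        have hed : e ∉ d := fun hed => hdsupp e hed h
        simp [hx'def, List.count_eq_zero_of_not_mem hed, h]
      have hcard' : (Finset.univ.filter (fun e => x' e ≠ 0)).card ≤ n := by
        have h1' := Finset.card_le_card hsub
        have h2' : emin ∈ Finset.univ.filter (fun e => x e ≠ 0) := by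
          simp [hdsupp emin hemin]
        have := Finset.card_erase_of_mem h2'
        omega
      have hx'span := ih x' hcard' h0' hx'circ
      have : x = x' + t • countVec d := by rw [hx'eq]; abel
      rw [this]
      exact Submodule.add_mem _ hx'span
        (Submodule.smul_mem _ t (Submodule.subset_span ⟨d, hd, rfl⟩))
    rcases hne.lt_or_gt with h | h
    · exact hwalk h heq
    · exact hwalk h heq.symm

open Classical in
lemma circSpace_le_cycleSpan [Fintype V] [Fintype E] [DecidableEq E] (src tgt : E → V) :
    circSpace src tgt ≤ cycleSpan src tgt := by
  intro x hx
  have hneg : ∀ e : {e : E // x e < 0}, ∃ d, IsSimpleCycle src tgt d ∧ e.1 ∈ d := fun e =>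
    exists_simple_cycle_mem (hx.2 e.1 (ne_of_lt e.2))
  choose D hD1 hD2 using hneg
  set w : E → ℝ := fun f => ∑ e : {e : E // x e < 0}, (-(x e.1)) * countVec (D e) f with hw
  have hwspan : w ∈ cycleSpan src tgt := by
    have : w = ∑ e : {e : E // x e < 0}, (-(x e.1)) • countVec (D e) := by
      funext f; simp [hw]
    rw [this]
    exact Submodule.sum_mem _ fun e _ =>
      Submodule.smul_mem _ _ (Submodule.subset_span ⟨D e, hD1 e, rfl⟩)
  have hwcirc : w ∈ circSpace src tgt := by
    have : w = ∑ e : {e : E // x e < 0}, (-(x e.1)) • countVec (D e) := by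
      funext f; simp [hw]
    rw [this]
    exact Submodule.sum_mem _ fun e _ =>
      Submodule.smul_mem _ _ (countVec_mem_circSpace (hD1 e).1)
  set y : E → ℝ := x + w with hy
  have hycirc : y ∈ circSpace src tgt := Submodule.add_mem _ hx hwcirc
  have hy0 : ∀ f, 0 ≤ y f := by
    intro f
    have hterms : ∀ e : {e : E // x e < 0}, 0 ≤ (-(x e.1)) * countVec (D e) f := by
      intro e
      apply mul_nonneg (by linarith [e.2])
      simp [countVec]
    by_cases hf : 0 ≤ x f
    · have : 0 ≤ w f := Finset.sum_nonneg fun e _ => hterms e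
      simp only [hy, Pi.add_apply]
      linarith
    · push_neg at hf
      set f' : {e : E // x e < 0} := ⟨f, hf⟩ with hf'
      have hcnt : (1:ℝ) ≤ countVec (D f') f := by
        have := List.one_le_count_iff.mpr (hD2 f')
        simp only [countVec]
        exact_mod_cast this
      have h1' : (-(x f)) * 1 ≤ (-(x f)) * countVec (D f') f :=
        mul_le_mul_of_nonneg_left hcnt (by linarith)
      have h2' : (-(x f')) * countVec (D f') f ≤ w f :=
        Finset.single_le_sum (fun e _ => hterms e) (Finset.mem_univ f')
      simp only [hy, Pi.add_apply]
      have : (-(x f)) ≤ w f := by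
        calc (-(x f)) = (-(x f)) * 1 := by ring
          _ ≤ (-(x f)) * countVec (D f') f := h1'
          _ ≤ w f := h2'
      linarith
  have hyspan : y ∈ cycleSpan src tgt :=
    nonneg_circ_mem_span src tgt _ y le_rfl hy0 hycirc
  have : x = y - w := by rw [hy]; abel
  rw [this]
  exact Submodule.sub_mem _ hyspan hwspan

lemma cycleSpan_eq_circSpace [Fintype V] [Fintype E] [DecidableEq E] (src tgt : E → V) :
    cycleSpan src tgt = circSpace src tgt := by
  refine le_antisymm ?_ (circSpace_le_cycleSpan src tgt)
  rw [cycleSpan, Submodule.span_le]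
  rintro x ⟨c, hc, rfl⟩
  exact countVec_mem_circSpace hc.1

lemma src_mem_fullVertices {src tgt : E → V} {e : E} (he : e ∈ fullEdges src tgt) :
    src e ∈ fullVertices src tgt := ⟨e, he, Or.inl rfl⟩

lemma tgt_mem_fullVertices {src tgt : E → V} {e : E} (he : e ∈ fullEdges src tgt) :
    tgt e ∈ fullVertices src tgt := ⟨e, he, Or.inr rfl⟩

open Classical in
/-- The incidence matrix of the full subgraph. -/
noncomputable def incMat (src tgt : E → V) :
    Matrix (fullVertices src tgt) (fullEdges src tgt) ℝ :=
  Matrix.of fun v e => (if tgt e.1 = v.1 then (1:ℝ) else 0) - (if src e.1 = v.1 then 1 else 0)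

open Classical in
/-- Extension by zero. -/
noncomputable def extZero (src tgt : E → V) : (↥(fullEdges src tgt) → ℝ) →ₗ[ℝ] (E → ℝ) where
  toFun z := fun e => if h : e ∈ fullEdges src tgt then z ⟨e, h⟩ else 0
  map_add' z w := by funext e; by_cases h : e ∈ fullEdges src tgt <;> simp [h]
  map_smul' t z := by funext e; by_cases h : e ∈ fullEdges src tgt <;> simp [h]

lemma extZero_injective (src tgt : E → V) : Function.Injective (extZero src tgt) := by
  intro z w h
  funext e
  have := congrFun h e.1
  simpa [extZero, e.2] using this

open Classical in
lemma sum_extZero (src tgt : E → V) [Fintype E] [Fintype ↥(fullEdges src tgt)]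
    (z : ↥(fullEdges src tgt) → ℝ) (f : E → V) (v : V) :
    (∑ e : E, if f e = v then extZero src tgt z e else 0)
      = ∑ e : ↥(fullEdges src tgt), if f e.1 = v then z e else 0 := by
  have h1 : (∑ e : E, if f e = v then extZero src tgt z e else 0)
      = ∑ e ∈ (fullEdges src tgt).toFinset, (if f e = v then extZero src tgt z e else 0) := by
    refine (Finset.sum_subset (Finset.subset_univ _) ?_).symm
    intro e _ he
    rw [Set.mem_toFinset] at he
    simp [extZero, he]
  rw [h1, Finset.sum_subtype (fullEdges src tgt).toFinset (fun e => Set.mem_toFinset)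
    (fun e => if f e = v then extZero src tgt z e else 0)]
  refine Finset.sum_congr rfl fun e _ => ?_
  have : extZero src tgt z e.1 = z e := by simp [extZero, e.2]
  rw [this]

open Classical in
lemma circSpace_eq_map (src tgt : E → V) [Fintype V] [Fintype E]
    [Fintype ↥(fullEdges src tgt)] :
    circSpace src tgt
      = Submodule.map (extZero src tgt) (LinearMap.ker (incMat src tgt).mulVecLin) := by
  have hmulVec : ∀ (z : ↥(fullEdges src tgt) → ℝ) (v : ↥(fullVertices src tgt)),
      (incMat src tgt).mulVecLin z v
        = (∑ e : ↥(fullEdges src tgt), if tgt e.1 = v.1 then z e else 0)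
          - ∑ e : ↥(fullEdges src tgt), if src e.1 = v.1 then z e else 0 := by
    intro z v
    rw [← Finset.sum_sub_distrib]
    simp only [Matrix.mulVecLin_apply, Matrix.mulVec, dotProduct, incMat, Matrix.of_apply]
    refine Finset.sum_congr rfl fun e _ => ?_
    by_cases h1 : tgt e.1 = v.1 <;> by_cases h2 : src e.1 = v.1 <;> simp [h1, h2]
  ext x
  constructor
  · rintro ⟨hcirc, hsupp⟩
    set z : ↥(fullEdges src tgt) → ℝ := fun e => x e.1 with hz
    have hxz : extZero src tgt z = x := by
      funext e
      by_cases h : e ∈ fullEdges src tgt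
      · simp [extZero, h, hz]
      · simp only [extZero, LinearMap.coe_mk, AddHom.coe_mk]
        rw [dif_neg h]
        by_contra hne
        exact h (hsupp e fun h0 => hne h0.symm)
    refine ⟨z, ?_, hxz⟩
    show (incMat src tgt).mulVecLin z = 0
    funext v
    rw [hmulVec z v]
    have h1 := sum_extZero src tgt z tgt v.1
    have h2 := sum_extZero src tgt z src v.1
    rw [hxz] at h1 h2
    rw [← h1, ← h2, hcirc v.1]
    simp
  · rintro ⟨z, hz, rfl⟩
    constructor
    · intro v
      rw [sum_extZero src tgt z tgt v, sum_extZero src tgt z src v]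
      by_cases hv : v ∈ fullVertices src tgt
      · have := congrFun (LinearMap.mem_ker.mp hz) ⟨v, hv⟩
        rw [hmulVec z ⟨v, hv⟩] at this
        have h0 : ((0 : ↥(fullVertices src tgt) → ℝ)) ⟨v, hv⟩ = 0 := rfl
        rw [h0] at this
        linarith [this]
      · have htgt : (∑ e : ↥(fullEdges src tgt), if tgt e.1 = v then z e else 0) = 0 :=
          Finset.sum_eq_zero fun e _ => by
            have hne : tgt e.1 ≠ v := fun h => hv (h ▸ tgt_mem_fullVertices e.2)
            rw [if_neg hne]
        have hsrc : (∑ e : ↥(fullEdges src tgt), if src e.1 = v then z e else 0) = 0 :=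
          Finset.sum_eq_zero fun e _ => by
            have hne : src e.1 ≠ v := fun h => hv (h ▸ src_mem_fullVertices e.2)
            rw [if_neg hne]
        rw [htgt, hsrc]
    · intro e he
      by_contra h
      simp [extZero, h] at he

open Classical in
lemma mulVec_transpose (src tgt : E → V) [Fintype ↥(fullVertices src tgt)]
    (y : ↥(fullVertices src tgt) → ℝ) (e : ↥(fullEdges src tgt)) :
    (incMat src tgt)ᵀ.mulVecLin y e
      = y ⟨tgt e.1, tgt_mem_fullVertices e.2⟩ - y ⟨src e.1, src_mem_fullVertices e.2⟩ := by
  simp only [Matrix.mulVecLin_apply, Matrix.mulVec, dotProduct, Matrix.transpose_apply,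
    incMat, Matrix.of_apply]
  have hpick : ∀ (w : V) (hw : w ∈ fullVertices src tgt),
      (∑ v : ↥(fullVertices src tgt), (if w = v.1 then (1:ℝ) else 0) * y v) = y ⟨w, hw⟩ := by
    intro w hw
    rw [Finset.sum_eq_single (⟨w, hw⟩ : ↥(fullVertices src tgt))]
    · simp
    · intro v _ hv
      have : w ≠ v.1 := fun h => hv (Subtype.ext h.symm)
      simp [this]
    · simp
  have expand : (∑ v : ↥(fullVertices src tgt),
        ((if tgt e.1 = v.1 then (1:ℝ) else 0) - (if src e.1 = v.1 then 1 else 0)) * y v)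
      = (∑ v : ↥(fullVertices src tgt), (if tgt e.1 = v.1 then (1:ℝ) else 0) * y v)
        - ∑ v : ↥(fullVertices src tgt), (if src e.1 = v.1 then (1:ℝ) else 0) * y v := by
    rw [← Finset.sum_sub_distrib]
    exact Finset.sum_congr rfl fun v _ => by ring
  rw [expand, hpick (tgt e.1) (tgt_mem_fullVertices e.2),
    hpick (src e.1) (src_mem_fullVertices e.2)]

open Classical in
/-- Kernel of the transpose incidence matrix is the space of functions on components. -/
noncomputable def kerTransposeEquiv (src tgt : E → V) [Fintype ↥(fullVertices src tgt)]
    [Fintype ↥(fullEdges src tgt)] :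
    LinearMap.ker ((incMat src tgt)ᵀ.mulVecLin) ≃ₗ[ℝ] (Quot (fullAdj src tgt) → ℝ) := by
  have hker : ∀ y : ↥(fullVertices src tgt) → ℝ,
      y ∈ LinearMap.ker ((incMat src tgt)ᵀ.mulVecLin) ↔
      ∀ e : ↥(fullEdges src tgt),
        y ⟨tgt e.1, tgt_mem_fullVertices e.2⟩ = y ⟨src e.1, src_mem_fullVertices e.2⟩ := by
    intro y
    rw [LinearMap.mem_ker]
    constructor
    · intro h e
      have := congrFun h e
      rw [mulVec_transpose src tgt y e] at this
      have h0 : ((0 : ↥(fullEdges src tgt) → ℝ)) e = 0 := rfl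
      rw [h0] at this
      linarith
    · intro h
      funext e
      rw [mulVec_transpose src tgt y e, h e]
      simp
  have hresp : ∀ (y : ↥(fullVertices src tgt) → ℝ),
      y ∈ LinearMap.ker ((incMat src tgt)ᵀ.mulVecLin) →
      ∀ a b, fullAdj src tgt a b → y a = y b := by
    intro y hy a b ⟨e, he, hab⟩
    have := (hker y).mp hy ⟨e, he⟩
    rcases hab with ⟨h1, h2⟩ | ⟨h1, h2⟩
    · have ha : a = ⟨src e, src_mem_fullVertices he⟩ := Subtype.ext h1.symm
      have hb : b = ⟨tgt e, tgt_mem_fullVertices he⟩ := Subtype.ext h2.symm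
      rw [ha, hb, this]
    · have ha : a = ⟨tgt e, tgt_mem_fullVertices he⟩ := Subtype.ext h2.symm
      have hb : b = ⟨src e, src_mem_fullVertices he⟩ := Subtype.ext h1.symm
      rw [ha, hb, this]
  exact
  { toFun := fun y => Quot.lift (fun a => y.1 a) (hresp y.1 y.2)
    map_add' := fun y z => by funext q; induction q using Quot.ind; rfl
    map_smul' := fun t y => by funext q; induction q using Quot.ind; rfl
    invFun := fun g => ⟨fun a => g (Quot.mk _ a), by
      rw [hker]
      intro e
      refine congrArg g (Quot.sound ?_)
      exact ⟨e.1, e.2, Or.inr ⟨rfl, rfl⟩⟩⟩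
    left_inv := fun y => Subtype.ext (funext fun a => rfl)
    right_inv := fun g => funext fun q => by induction q using Quot.ind; rfl }

lemma card_fullVertices_le (src tgt : E → V) [Fintype ↥(fullVertices src tgt)]
    [Fintype ↥(fullEdges src tgt)] :
    Fintype.card ↥(fullVertices src tgt) ≤ Fintype.card ↥(fullEdges src tgt) := by
  have h : ∀ v : ↥(fullVertices src tgt), ∃ e : ↥(fullEdges src tgt), src e.1 = v.1 := by
    intro v
    obtain ⟨e, he, hsrc⟩ := exists_src_eq v.2
    exact ⟨⟨e, he⟩, hsrc⟩
  choose f hf using h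
  refine Fintype.card_le_of_injective f fun a b hab => ?_
  apply Subtype.ext
  rw [← hf a, ← hf b, hab]

/-- The sum-of-coordinates functional. -/
noncomputable def sumFun (E : Type*) [Fintype E] : (E → ℝ) →ₗ[ℝ] ℝ where
  toFun x := ∑ e, x e
  map_add' x y := by simp [Finset.sum_add_distrib]
  map_smul' t x := by simp [Finset.mul_sum]

lemma sum_count_eq_length [Fintype E] [DecidableEq E] (c : List E) :
    (∑ e, c.count e) = c.length := by
  induction c with
  | nil => simp
  | cons a c ih =>
    simp only [List.count_cons, List.length_cons, Finset.sum_add_distrib, ih, beq_iff_eq]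
    congr 1
    rw [Finset.sum_ite_eq Finset.univ a (fun _ => 1)]
    simp

lemma sumFun_cycleVec [Fintype E] [DecidableEq E] {src tgt : E → V} {c : List E}
    (hc : IsSimpleCycle src tgt c) : sumFun E (cycleVec c) = 1 := by
  have hne : c.length ≠ 0 := fun h => hc.1.1 (List.length_eq_zero_iff.mp h)
  simp only [sumFun, LinearMap.coe_mk, AddHom.coe_mk, cycleVec]
  rw [← Finset.sum_div]
  have hsum : (∑ e, ((c.count e : ℝ))) = ((c.length : ℕ) : ℝ) := by
    rw [← sum_count_eq_length (c := c)]
    push_cast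
    rfl
  rw [hsum]
  field_simp

end Aux

/-- For a finite directed multigraph `G` with largest full subgraph `H`,
`dim P(G) = |E(H)| − |V(H)| + c(H) − 1` where `c(H)` is the number of connected
components of `H`. -/
theorem cyclePolytope_dim
    [Fintype V] [Fintype E] [DecidableEq E] (src tgt : E → V) :
    Module.finrank ℝ (vectorSpan ℝ (cyclePolytope src tgt))
      = (fullEdges src tgt).ncard - (fullVertices src tgt).ncard
          + fullComponents src tgt - 1 := by
  classical
  haveI : Fintype ↥(fullEdges src tgt) := Fintype.ofFinite _
  haveI : Fintype ↥(fullVertices src tgt) := Fintype.ofFinite _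
  haveI : Fintype (Quot (fullAdj src tgt)) := Fintype.ofFinite _
  set SCn : Set (E → ℝ) := { x | ∃ c, IsSimpleCycle src tgt c ∧ x = cycleVec c } with hSCn
  have hVS : vectorSpan ℝ (cyclePolytope src tgt) = vectorSpan ℝ SCn := by
    rw [cyclePolytope, ← direction_affineSpan, affineSpan_convexHull, direction_affineSpan]
  have hm : (fullEdges src tgt).ncard = Fintype.card ↥(fullEdges src tgt) := by
    rw [← Nat.card_coe_set_eq, Nat.card_eq_fintype_card]
  have hn : (fullVertices src tgt).ncard = Fintype.card ↥(fullVertices src tgt) := by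
    rw [← Nat.card_coe_set_eq, Nat.card_eq_fintype_card]
  have hcc : fullComponents src tgt = Fintype.card (Quot (fullAdj src tgt)) :=
    Nat.card_eq_fintype_card
  by_cases hex : ∃ c, IsSimpleCycle src tgt c
  · obtain ⟨c0, hc0⟩ := hex
    have hspan : Submodule.span ℝ SCn = cycleSpan src tgt := by
      apply _root_.le_antisymm
      · rw [Submodule.span_le]
        rintro x ⟨c, hc, rfl⟩
        have h1 : cycleVec c = ((c.length : ℝ))⁻¹ • countVec c := by
          funext e; simp [cycleVec, countVec, div_eq_inv_mul]
        rw [h1]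
        exact Submodule.smul_mem _ _ (Submodule.subset_span ⟨c, hc, rfl⟩)
      · rw [cycleSpan, Submodule.span_le]
        rintro x ⟨c, hc, rfl⟩
        have hne : (c.length : ℝ) ≠ 0 :=
          Nat.cast_ne_zero.mpr fun h => hc.1.1 (List.length_eq_zero_iff.mp h)
        have h1 : countVec c = (c.length : ℝ) • cycleVec c := by
          funext e
          simp only [cycleVec, countVec, Pi.smul_apply, smul_eq_mul]
          field_simp
        rw [h1]
        exact Submodule.smul_mem _ _ (Submodule.subset_span ⟨c, hc, rfl⟩)
    have hv0 : cycleVec c0 ∈ SCn := ⟨c0, hc0, rfl⟩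
    have hsum1 : ∀ y ∈ SCn, sumFun E y = 1 := by
      rintro y ⟨c, hc, rfl⟩; exact sumFun_cycleVec hc
    have hv0ne : cycleVec c0 ≠ 0 := by
      intro h
      have := hsum1 _ hv0
      rw [h] at this
      simp at this
    have hkerle : vectorSpan ℝ SCn ≤ LinearMap.ker (sumFun E) := by
      rw [vectorSpan, Submodule.span_le]
      rintro x hx
      obtain ⟨y, hy, z, hz, rfl⟩ := Set.mem_vsub.mp hx
      rw [SetLike.mem_coe, LinearMap.mem_ker]
      have : (y -ᵥ z : E → ℝ) = y - z := rfl
      rw [this, map_sub, hsum1 y hy, hsum1 z hz]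
      ring
    have hsup : Submodule.span ℝ SCn = vectorSpan ℝ SCn ⊔ (ℝ ∙ (cycleVec c0)) := by
      apply _root_.le_antisymm
      · rw [Submodule.span_le]
        intro y hy
        rw [SetLike.mem_coe, Submodule.mem_sup]
        refine ⟨y - cycleVec c0, vsub_mem_vectorSpan ℝ hy hv0, cycleVec c0,
          Submodule.mem_span_singleton_self _, by abel⟩
      · apply sup_le
        · rw [vectorSpan, Submodule.span_le]
          rintro x hx
          obtain ⟨y, hy, z, hz, rfl⟩ := Set.mem_vsub.mp hx
          have : (y -ᵥ z : E → ℝ) = y - z := rfl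
          rw [SetLike.mem_coe, this]
          exact Submodule.sub_mem _ (Submodule.subset_span hy) (Submodule.subset_span hz)
        · rw [Submodule.span_singleton_le_iff_mem]
          exact Submodule.subset_span hv0
    have hinf : vectorSpan ℝ SCn ⊓ (ℝ ∙ (cycleVec c0)) = ⊥ := by
      rw [eq_bot_iff]
      rintro x ⟨hx1, hx2⟩
      obtain ⟨t, rfl⟩ := Submodule.mem_span_singleton.mp hx2
      have h0 : sumFun E (t • cycleVec c0) = 0 := hkerle hx1
      rw [map_smul, sumFun_cycleVec hc0, smul_eq_mul, mul_one] at h0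
      rw [Submodule.mem_bot, h0, zero_smul]
    have hrank1 : Module.finrank ℝ (Submodule.span ℝ SCn)
        = Module.finrank ℝ (vectorSpan ℝ SCn) + 1 := by
      rw [hsup]
      have hq := Submodule.finrank_sup_add_finrank_inf_eq (vectorSpan ℝ SCn)
        (ℝ ∙ (cycleVec c0))
      rw [hinf, finrank_bot] at hq
      have h1 : Module.finrank ℝ (ℝ ∙ (cycleVec c0)) = 1 := finrank_span_singleton hv0ne
      omega
    set M := incMat src tgt with hM
    have hrdef : M.rank = Module.finrank ℝ (LinearMap.range M.mulVecLin) := rfl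
    have hrn1 : M.rank + Module.finrank ℝ (LinearMap.ker M.mulVecLin)
        = Fintype.card ↥(fullEdges src tgt) := by
      rw [hrdef]
      have := LinearMap.finrank_range_add_finrank_ker M.mulVecLin
      rwa [Module.finrank_pi] at this
    have hrdefT : M.transpose.rank = Module.finrank ℝ (LinearMap.range M.transpose.mulVecLin) := rfl
    have hrn2 : M.transpose.rank + Module.finrank ℝ (LinearMap.ker M.transpose.mulVecLin)
        = Fintype.card ↥(fullVertices src tgt) := by
      rw [hrdefT]
      have := LinearMap.finrank_range_add_finrank_ker M.transpose.mulVecLin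
      rwa [Module.finrank_pi] at this
    have hkerT : Module.finrank ℝ (LinearMap.ker M.transpose.mulVecLin)
        = Fintype.card (Quot (fullAdj src tgt)) := by
      rw [(kerTransposeEquiv src tgt).finrank_eq, Module.finrank_pi]
    have htr : M.transpose.rank = M.rank := Matrix.rank_transpose M
    have hker_eq : Module.finrank ℝ (circSpace src tgt)
        = Module.finrank ℝ (LinearMap.ker M.mulVecLin) := by
      rw [circSpace_eq_map src tgt]
      exact (Submodule.equivMapOfInjective (extZero src tgt) (extZero_injective src tgt)
        (LinearMap.ker M.mulVecLin)).finrank_eq.symm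
    have hUdim : Module.finrank ℝ (Submodule.span ℝ SCn)
        = Module.finrank ℝ (circSpace src tgt) := by
      rw [hspan, cycleSpan_eq_circSpace]
    have hle := card_fullVertices_le src tgt
    rw [hVS, hm, hn, hcc]
    omega
  · have hfe : fullEdges src tgt = ∅ := by
      ext e
      simp only [Set.mem_empty_iff_false, iff_false]
      rintro ⟨c, hc, _⟩
      obtain ⟨d, hd, _⟩ := exists_simple_cycle_subset hc
      exact hex ⟨d, hd⟩
    have hfv : fullVertices src tgt = ∅ := by
      ext v
      simp only [Set.mem_empty_iff_false, iff_false]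
      rintro ⟨e, he, _⟩
      rw [hfe] at he
      exact he
    have hSCne : SCn = ∅ := by
      rw [hSCn]
      ext x
      simp only [Set.mem_setOf_eq, Set.mem_empty_iff_false, iff_false]
      rintro ⟨c, hc, _⟩
      exact hex ⟨c, hc⟩
    haveI hVempty : IsEmpty ↥(fullVertices src tgt) := Set.isEmpty_coe_sort.mpr hfv
    haveI : IsEmpty (Quot (fullAdj src tgt)) :=
      ⟨fun q => by
        refine Quot.ind (β := fun _ => False) ?_ q
        intro a
        exact hVempty.false a⟩
    have hc0 : fullComponents src tgt = 0 := by
      rw [fullComponents, Nat.card_of_isEmpty]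
    rw [hVS, hSCne, vectorSpan_empty, hfe, hfv, hc0]
    simp
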